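/- Let G be a finite group with an orthogonal matrix representation M : G → O_n(ℝ), acting on the space Sym_n(ℝ) of real symmetric n×n matrices by X^g := M(g) X M(g)^T. Let C, A_1, …, A_m ∈ Sym_n(ℝ) and b ∈ ℝ^m, and let L := {X ∈ Sym_n(ℝ) : ⟨A_i, X⟩ = b_i for 1 ≤ i ≤ m, X ⪰ 0} be the feasible set of the semidefinite program y* = inf{⟨X, C⟩ : X ∈ L}. Assume the SDP is G-invariant, i.e. X ∈ L implies X^g ∈ L for all g ∈ G, and ⟨X^g, C⟩ = ⟨X, C⟩ for all X ∈ Sym_n(ℝ) and g ∈ G. Then the optimal value is unchanged by restricting to invariant matrices: inf{⟨X, C⟩ : X ∈ L} = inf{⟨X, C⟩ : X ∈ L and X^g = X for all g ∈ G}. -/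

import Mathlib

open Matrix

/-- **Invariance of the optimal value of a `G`-invariant SDP.**
`M : G → Matrix (Fin n) (Fin n) ℝ` is an orthogonal matrix representation of the finite
group `G`, acting on symmetric matrices by `X ↦ M g * X * (M g)ᵀ`.  If both the feasible
set `L` of the SDP and the objective `X ↦ ⟨X, C⟩ = Tr (X * C)` are `G`-invariant, then the
optimal value is unchanged when restricting to `G`-invariant feasible matrices. -/
theorem sdp_symmetry_reduction {n m : ℕ} {G : Type*} [Group G] [Fintype G]
    (M : G → Matrix (Fin n) (Fin n) ℝ)
    (hMhom : ∀ g h : G, M (g * h) = M g * M h)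
    (hMorth : ∀ g : G, M g * (M g)ᵀ = 1)
    (C : Matrix (Fin n) (Fin n) ℝ) (hC : C.IsSymm)
    (A : Fin m → Matrix (Fin n) (Fin n) ℝ) (hA : ∀ i, (A i).IsSymm)
    (b : Fin m → ℝ)
    (L : Set (Matrix (Fin n) (Fin n) ℝ))
    (hL : L = {X | X.IsSymm ∧ (∀ i, (A i * X).trace = b i) ∧ X.PosSemidef})
    (hLinv : ∀ X ∈ L, ∀ g : G, M g * X * (M g)ᵀ ∈ L)
    (hCinv : ∀ (X : Matrix (Fin n) (Fin n) ℝ) (g : G),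
      ((M g * X * (M g)ᵀ) * C).trace = (X * C).trace) :
    sInf ((fun X => (X * C).trace) '' L) =
      sInf ((fun X => (X * C).trace) ''
        {X | X ∈ L ∧ ∀ g : G, M g * X * (M g)ᵀ = X}) := by
  congr 1
  apply Set.Subset.antisymm
  · -- every value attained on L is attained on the invariant set, via group averaging
    rintro - ⟨X, hX, rfl⟩
    have c0 : (0 : ℝ) < (Fintype.card G : ℝ) := by
      exact_mod_cast Fintype.card_pos
    set c : ℝ := ((Fintype.card G : ℝ))⁻¹ with hc
    have hc0 : 0 ≤ c := by positivity
    set Y : Matrix (Fin n) (Fin n) ℝ := c • ∑ g : G, M g * X * (M g)ᵀ with hY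
    have hXg : ∀ g : G, M g * X * (M g)ᵀ ∈ L := hLinv X hX
    -- Y is symmetric
    have hYsymm : Y.IsSymm := by
      unfold Matrix.IsSymm
      rw [hY, transpose_smul, transpose_sum]
      congr 1
      refine Finset.sum_congr rfl fun g _ => ?_
      have := (hL ▸ hXg g).1
      exact this
    -- Y satisfies the linear constraints
    have hYtr : ∀ i, (A i * Y).trace = b i := by
      intro i
      have : ∀ g : G, (A i * (M g * X * (M g)ᵀ)).trace = b i :=
        fun g => (hL ▸ hXg g).2.1 i
      rw [hY, Matrix.mul_smul, trace_smul, Finset.mul_sum, trace_sum]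
      simp only [this, Finset.sum_const, Finset.card_univ, nsmul_eq_mul, smul_eq_mul]
      rw [hc]
      field_simp
    -- Y is positive semidefinite
    have hYpsd : Y.PosSemidef := by
      refine Matrix.PosSemidef.of_dotProduct_mulVec_nonneg ?_ ?_
      · exact Matrix.isHermitian_iff_isSymm.mpr hYsymm
      · intro x
        have hterm : ∀ g : G, 0 ≤ star x ⬝ᵥ ((M g * X * (M g)ᵀ) *ᵥ x) :=
          fun g => (hL ▸ hXg g).2.2.dotProduct_mulVec_nonneg x
        rw [hY, smul_mulVec, dotProduct_smul]
        refine smul_nonneg hc0 ?_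
        have hs : (∑ g : G, M g * X * (M g)ᵀ) *ᵥ x
            = ∑ g : G, (M g * X * (M g)ᵀ) *ᵥ x :=
          map_sum (Matrix.mulVec.addMonoidHomLeft x)
            (fun g : G => M g * X * (M g)ᵀ) Finset.univ
        have hd : star x ⬝ᵥ ∑ g : G, (M g * X * (M g)ᵀ) *ᵥ x
            = ∑ g : G, star x ⬝ᵥ ((M g * X * (M g)ᵀ) *ᵥ x) :=
          map_sum (⟨⟨fun v => star x ⬝ᵥ v, dotProduct_zero _⟩,
            fun a b => dotProduct_add _ a b⟩ : (Fin n → ℝ) →+ ℝ) _ Finset.univ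
        rw [hs, hd]
        exact Finset.sum_nonneg fun g _ => hterm g
    have hYL : Y ∈ L := by rw [hL]; exact ⟨hYsymm, hYtr, hYpsd⟩
    -- Y is invariant
    have hYinv : ∀ h : G, M h * Y * (M h)ᵀ = Y := by
      intro h
      rw [hY, Matrix.mul_smul, Matrix.smul_mul, Finset.mul_sum, Finset.sum_mul]
      congr 1
      have key : ∀ g : G, M h * (M g * X * (M g)ᵀ) * (M h)ᵀ
          = M (h * g) * X * (M (h * g))ᵀ := by
        intro g
        rw [hMhom, transpose_mul]
        noncomm_ring
      calc ∑ g : G, M h * (M g * X * (M g)ᵀ) * (M h)ᵀ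
          = ∑ g : G, M (h * g) * X * (M (h * g))ᵀ :=
            Finset.sum_congr rfl fun g _ => key g
        _ = ∑ g : G, M g * X * (M g)ᵀ :=
            Fintype.sum_equiv (Equiv.mulLeft h) _ _ (fun g => rfl)
    -- Y has the same objective value
    have hYobj : (Y * C).trace = (X * C).trace := by
      rw [hY, Matrix.smul_mul, trace_smul, Finset.sum_mul, trace_sum]
      simp only [hCinv, Finset.sum_const, Finset.card_univ, nsmul_eq_mul, smul_eq_mul]
      rw [hc]
      field_simp
    exact ⟨Y, ⟨hYL, hYinv⟩, hYobj⟩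
  · exact Set.image_mono fun X hX => hX.1
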